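/- Let U ∈ SU(2) and R ∈ SO(3) satisfy U σ_j U* = Σ_{k=1}^{3} (R⁻¹)_{jk} σ_k for j = 1,2,3. Then for every complex polynomial p in three real variables and every N ∈ ℕ, U^{⊗N} Q_{1/N}(p) (U*)^{⊗N} = Q_{1/N}(p ∘ R⁻¹), where (p ∘ R⁻¹)(x) = p(R⁻¹x). -/

import Mathlib

open scoped ComplexConjugate
open MeasureTheory Filter Topology

noncomputable section

/-! ## Setting

`M₂(ℂ)^{⊗N}` is realized as matrices indexed by `Fin N → Fin 2`, acting on
`(ℂ²)^{⊗N} = EuclideanSpace ℂ (Fin N → Fin 2)`. -/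

/-- `M₂(ℂ)^{⊗N}`, realized as matrices indexed by `Fin N → Fin 2`. -/
abbrev TP (N : ℕ) : Type := Matrix (Fin N → Fin 2) (Fin N → Fin 2) ℂ

/-- The Pauli matrices `σ₁, σ₂, σ₃`. -/
def pauli : Fin 3 → Matrix (Fin 2) (Fin 2) ℂ
  | 0 => !![0, 1; 1, 0]
  | 1 => !![0, -Complex.I; Complex.I, 0]
  | 2 => !![1, 0; 0, -1]

/-- The symmetrization operator `S_N` on `M₂(ℂ)^{⊗N}`: the average over all permutations
of the tensor factors. -/
def symmMat (N : ℕ) (A : TP N) : TP N :=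
  (N.factorial : ℂ)⁻¹ • ∑ σ : Equiv.Perm (Fin N), Matrix.of fun i j => A (i ∘ σ) (j ∘ σ)

/-- `b ⊗ I₂^{⊗(N−M)}` (junk value `0` if `M > N`). -/
def embedMat (M N : ℕ) (b : TP M) : TP N :=
  if h : M ≤ N then
    Matrix.of fun i j =>
      b (fun k => i (Fin.castLE h k)) (fun k => j (Fin.castLE h k)) *
        ∏ k ∈ Finset.univ.filter (fun k : Fin N => M ≤ (k : ℕ)),
          (if i k = j k then (1 : ℂ) else 0)
  else 0

/-- `S_{M,N}(b) = S_N(b ⊗ I₂^{⊗(N−M)})`. -/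
def SMN (M N : ℕ) (b : TP M) : TP N := symmMat N (embedMat M N b)

/-- The elementary tensor `σ_{m 0} ⊗ ⋯ ⊗ σ_{m (L-1)}` as a matrix on `(ℂ²)^{⊗L}`. -/
def pauliTensor {L : ℕ} (m : Fin L → Fin 3) : TP L :=
  Matrix.of fun i j => ∏ k, pauli (m k) (i k) (j k)

/-- For a monomial with exponents `d`, the list of its variable indices (first `d 0` copies
of `0`, then `d 1` copies of `1`, then `d 2` copies of `2`). -/
def monFun (d : Fin 3 →₀ ℕ) : Fin (d 0 + d 1 + d 2) → Fin 3 := fun k =>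
  if (k : ℕ) < d 0 then 0 else if (k : ℕ) < d 0 + d 1 then 1 else 2

/-- Quantization of the monomial `x^{d 0} y^{d 1} z^{d 2}`:
`S_{L,N}(σ_{j₁} ⊗ ⋯ ⊗ σ_{j_L})` if `L ≤ N`, and `0` if `L > N`. -/
def Qmon (N : ℕ) (d : Fin 3 →₀ ℕ) : TP N :=
  SMN (d 0 + d 1 + d 2) N (pauliTensor (monFun d))

/-- The quantization map `Q_{1/N}`: the linear extension of `Qmon` to all complex
polynomials in the three real variables `x, y, z`. -/
def Q (N : ℕ) (p : MvPolynomial (Fin 3) ℂ) : TP N :=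
  ∑ d ∈ p.support, p.coeff d • Qmon N d

/-- The symmetric subspace `Sym^N(ℂ²) ⊆ (ℂ²)^{⊗N}` (the fixed points of the permutation
action, i.e. the range of the vector symmetrizer). -/
def SymSub (N : ℕ) : Submodule ℂ (EuclideanSpace ℂ (Fin N → Fin 2)) where
  carrier := {v | ∀ σ : Equiv.Perm (Fin N), ∀ i, v (i ∘ σ) = v i}
  add_mem' := by
    intro a b ha hb σ i
    have : (a + b) (i ∘ σ) = a (i ∘ σ) + b (i ∘ σ) := rfl
    rw [this, ha σ i, hb σ i]; rfl
  zero_mem' := by intro σ i; rfl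
  smul_mem' := by
    intro c v hv σ i
    have : (c • v) (i ∘ σ) = c • (v (i ∘ σ)) := rfl
    rw [this, hv σ i]; rfl

/-- The vector symmetrizer. -/
def symVec (N : ℕ) (v : EuclideanSpace ℂ (Fin N → Fin 2)) :
    EuclideanSpace ℂ (Fin N → Fin 2) :=
  WithLp.toLp 2 (fun i => (N.factorial : ℂ)⁻¹ * ∑ σ : Equiv.Perm (Fin N), v (i ∘ σ))

lemma symVec_mem (N : ℕ) (v : EuclideanSpace ℂ (Fin N → Fin 2)) :
    symVec N v ∈ SymSub N := by
  intro τ i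
  show (N.factorial : ℂ)⁻¹ * ∑ σ : Equiv.Perm (Fin N), v ((i ∘ τ) ∘ σ)
      = (N.factorial : ℂ)⁻¹ * ∑ σ : Equiv.Perm (Fin N), v (i ∘ σ)
  congr 1
  exact Fintype.sum_equiv (Equiv.mulLeft τ) _ _ (fun σ => by rfl)

/-- The vector symmetrizer as a linear map onto the symmetric subspace. -/
def symProj (N : ℕ) : EuclideanSpace ℂ (Fin N → Fin 2) →ₗ[ℂ] SymSub N where
  toFun v := ⟨symVec N v, symVec_mem N v⟩
  map_add' v w := by
    apply Subtype.ext
    refine PiLp.ext ?_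
    intro i
    show (N.factorial : ℂ)⁻¹ * ∑ σ : Equiv.Perm (Fin N), (v + w) (i ∘ σ) = _
    have h : ∀ σ : Equiv.Perm (Fin N), (v + w) (i ∘ σ) = v (i ∘ σ) + w (i ∘ σ) :=
      fun _ => rfl
    simp only [h, Finset.sum_add_distrib]
    show _ = (N.factorial : ℂ)⁻¹ * (∑ σ : Equiv.Perm (Fin N), v (i ∘ σ))
        + (N.factorial : ℂ)⁻¹ * (∑ σ : Equiv.Perm (Fin N), w (i ∘ σ))
    ring
  map_smul' c v := by
    apply Subtype.ext
    refine PiLp.ext ?_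
    intro i
    show (N.factorial : ℂ)⁻¹ * ∑ σ : Equiv.Perm (Fin N), (c • v) (i ∘ σ) = _
    have h : ∀ σ : Equiv.Perm (Fin N), (c • v) (i ∘ σ) = c * v (i ∘ σ) := fun _ => rfl
    simp only [h, ← Finset.mul_sum]
    show _ = c * ((N.factorial : ℂ)⁻¹ * (∑ σ : Equiv.Perm (Fin N), v (i ∘ σ)))
    ring

/-- The restriction (compression) of a matrix `A` on `(ℂ²)^{⊗N}` to the symmetric subspace
`Sym^N(ℂ²)`, as a continuous linear operator; when `A` leaves `Sym^N(ℂ²)` invariant (as do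
all operators considered here) this is exactly the restriction `A|_{Sym^N(ℂ²)}`. -/
def restrSym (N : ℕ) (A : TP N) : SymSub N →L[ℂ] SymSub N :=
  LinearMap.toContinuousLinearMap
    ((symProj N) ∘ₗ (Matrix.toEuclideanLin A) ∘ₗ (SymSub N).subtype)

/-- The unit sphere `S² ⊂ ℝ³`. -/
abbrev S2 : Type := Metric.sphere (0 : EuclideanSpace ℝ (Fin 3)) 1

/-- Spherical coordinates `(θ, φ) ↦ (sin θ cos φ, sin θ sin φ, cos θ)`. -/
def sphCoord (a : ℝ × ℝ) : EuclideanSpace ℝ (Fin 3) :=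
  WithLp.toLp 2 ![Real.sin a.1 * Real.cos a.2, Real.sin a.1 * Real.sin a.2, Real.cos a.1]

lemma sphCoord_mem (a : ℝ × ℝ) :
    sphCoord a ∈ Metric.sphere (0 : EuclideanSpace ℝ (Fin 3)) 1 := by
  have h : ‖sphCoord a‖ = 1 := by
    rw [EuclideanSpace.norm_eq]
    have : ∑ i : Fin 3, sphCoord a i ^ 2 = 1 := by
      have hs := Real.sin_sq_add_cos_sq a.1
      have hc := Real.sin_sq_add_cos_sq a.2
      simp [sphCoord, Fin.sum_univ_three]
      nlinarith [hs, hc]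
    have h2 : ∀ i : Fin 3, ‖sphCoord a i‖ ^ 2 = sphCoord a i ^ 2 := fun i => sq_abs _
    simp only [h2, this]
    exact Real.sqrt_one
  simpa [mem_sphere_iff_norm] using h

/-- The standard surface measure `dΩ` on `S²` (of total mass `4π`), realized as the
push-forward of `sin θ dθ dφ` on `[0,π] × (−π,π]` under spherical coordinates. -/
def μS2 : Measure S2 :=
  Measure.map (fun a : ℝ × ℝ => (⟨sphCoord a, sphCoord_mem a⟩ : S2))
    (((volume : Measure (ℝ × ℝ)).restrict
        (Set.Icc (0 : ℝ) Real.pi ×ˢ Set.Ioc (-Real.pi) Real.pi)).withDensity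
      fun a => ENNReal.ofReal (Real.sin a.1))

/-- The polar angle `θ ∈ [0, π]` of a point of `S²`. -/
def thetaOf (Ω : S2) : ℝ := Real.arccos ((Ω : EuclideanSpace ℝ (Fin 3)) 2)

/-- The azimuthal angle `φ ∈ (−π, π]` of a point of `S²`. -/
def phiOf (Ω : S2) : ℝ :=
  Complex.arg (((Ω : EuclideanSpace ℝ (Fin 3)) 0 : ℂ) +
    ((Ω : EuclideanSpace ℝ (Fin 3)) 1 : ℂ) * Complex.I)

/-- The coherent spin state `|Ω⟩₁ = cos(θ/2) e₁ + e^{iφ} sin(θ/2) e₂ ∈ ℂ²`. -/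
def cs1 (Ω : S2) : Fin 2 → ℂ :=
  ![(Real.cos (thetaOf Ω / 2) : ℂ),
    Complex.exp (Complex.I * (phiOf Ω : ℂ)) * (Real.sin (thetaOf Ω / 2) : ℂ)]

/-- The `N`-fold coherent spin state `|Ω⟩_N = |Ω⟩₁^{⊗N} ∈ (ℂ²)^{⊗N}`. -/
def csN (N : ℕ) (Ω : S2) : EuclideanSpace ℂ (Fin N → Fin 2) :=
  WithLp.toLp 2 (fun i => ∏ k, cs1 Ω (i k))

/-- The matrix of the weak integral `((N+1)/(4π)) ∫_{S²} f(Ω) |Ω⟩⟨Ω|_N dΩ` on `(ℂ²)^{⊗N}`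
(entrywise Bochner integral, which in finite dimension coincides with the weak integral). -/
def Q'mat (N : ℕ) (f : S2 → ℂ) : TP N :=
  Matrix.of fun i j =>
    ((N + 1 : ℂ) / (4 * (Real.pi : ℂ))) * ∫ Ω, f Ω * csN N Ω i * conj (csN N Ω j) ∂μS2

/-- The coherent-state (Berezin) quantization map `Q'_{1/N}`, as an operator on
`Sym^N(ℂ²)` (the range of `|Ω⟩⟨Ω|_N` lies in `Sym^N(ℂ²)`, so the compression coincides
with the operator defined by the weak integral). -/
def Q' (N : ℕ) (f : S2 → ℂ) : SymSub N →L[ℂ] SymSub N := restrSym N (Q'mat N f)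

/-- The restriction of a polynomial (in three real variables) to the unit sphere `S²`. -/
def restrictS2 (p : MvPolynomial (Fin 3) ℂ) : S2 → ℂ :=
  fun Ω => MvPolynomial.eval (fun i => ((Ω : EuclideanSpace ℝ (Fin 3)) i : ℂ)) p

/-- The restriction to `S²` as a linear map. -/
def restrictS2Lin : MvPolynomial (Fin 3) ℂ →ₗ[ℂ] (S2 → ℂ) where
  toFun := restrictS2
  map_add' p q := by funext Ω; simp [restrictS2]
  map_smul' c p := by funext Ω; simp [restrictS2]

/-- `P_N(S²)`: the space of restrictions to `S²` of complex polynomials of degree `≤ N`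
in three real variables. -/
def PNS2 (N : ℕ) : Submodule ℂ (S2 → ℂ) where
  carrier := {g | ∃ p : MvPolynomial (Fin 3) ℂ, p.totalDegree ≤ N ∧ g = restrictS2 p}
  add_mem' := by
    rintro a b ⟨p, hp, rfl⟩ ⟨q, hq, rfl⟩
    exact ⟨p + q, le_trans (MvPolynomial.totalDegree_add p q) (by omega),
      by funext Ω; simp [restrictS2]⟩
  zero_mem' := ⟨0, by simp, by funext Ω; simp [restrictS2]⟩
  smul_mem' := by
    rintro c a ⟨p, hp, rfl⟩
    exact ⟨c • p, le_trans (MvPolynomial.totalDegree_smul_le c p) hp,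
      by funext Ω; simp [restrictS2]⟩

/-- The `N`-fold tensor power `U^{⊗N}` of a `2×2` matrix, on `(ℂ²)^{⊗N}`. -/
def tpow (N : ℕ) (U : Matrix (Fin 2) (Fin 2) ℂ) : TP N :=
  Matrix.of fun i j => ∏ k, U (i k) (j k)

/-- `σ_k(j) = I₂ ⊗ ⋯ ⊗ σ_k ⊗ ⋯ ⊗ I₂` with the Pauli matrix `σ_k` in the `j`-th slot. -/
def pauliAt (N : ℕ) (k : Fin 3) (j : Fin N) : TP N :=
  Matrix.of fun a b =>
    pauli k (a j) (b j) *
      ∏ t ∈ Finset.univ.filter (fun t : Fin N => t ≠ j), (if a t = b t then (1 : ℂ) else 0)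

/-- The quantum Curie–Weiss Hamiltonian
`h^{CW}_{1/N} = (1/N)( −(J/(2N)) Σ_{i,j} σ₃(i)σ₃(j) − B Σ_j σ₁(j))`. -/
def hCW (J B : ℝ) (N : ℕ) : TP N :=
  ((N : ℂ))⁻¹ • ((-(J / (2 * N)) : ℂ) • ∑ i : Fin N, ∑ j : Fin N,
      pauliAt N 2 i * pauliAt N 2 j
    + (-(B : ℂ)) • ∑ j : Fin N, pauliAt N 0 j)

open scoped Classical in
/-- The action of a (special orthogonal) matrix on the unit sphere `S²`
(junk value if the image does not lie on the sphere). -/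
def rotAct (R : Matrix (Fin 3) (Fin 3) ℝ) (Ω : S2) : S2 :=
  if h : (WithLp.toLp 2 (R.mulVec (Ω : EuclideanSpace ℝ (Fin 3))) : EuclideanSpace ℝ (Fin 3)) ∈
      Metric.sphere (0 : EuclideanSpace ℝ (Fin 3)) 1
  then ⟨WithLp.toLp 2 (R.mulVec (Ω : EuclideanSpace ℝ (Fin 3))), h⟩ else Ω

/-- A polynomial in three variables is harmonic if its Laplacian vanishes. -/
def IsHarmonic (p : MvPolynomial (Fin 3) ℂ) : Prop :=
  ∑ i : Fin 3, MvPolynomial.pderiv i (MvPolynomial.pderiv i p) = 0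

/-- The polynomial `x² + y² + z² − 1`. -/
def sphPoly : MvPolynomial (Fin 3) ℂ :=
  MvPolynomial.X 0 ^ 2 + MvPolynomial.X 1 ^ 2 + MvPolynomial.X 2 ^ 2 - 1

/-- The Dicke state `|k, N−k⟩ ∈ Sym^N(ℂ²)`: `binom(N,k)^{-1/2}` times the sum of all
elementary tensors with exactly `k` factors `e₂` (and `N−k` factors `e₁`). -/
def dicke (N k : ℕ) : EuclideanSpace ℂ (Fin N → Fin 2) :=
  WithLp.toLp 2 (fun i => if (Finset.univ.filter fun t => i t = 1).card = k
    then ((Real.sqrt (N.choose k) : ℂ))⁻¹ else 0)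

/-- The operator norm of a matrix acting on `(ℂ²)^{⊗N}` with its Euclidean (ℓ²) norm. -/
def matOpNorm {N : ℕ} (A : TP N) : ℝ :=
  ‖LinearMap.toContinuousLinearMap (Matrix.toEuclideanLin A)‖

-- ## Auxiliary lemmas

section Aux
open Finset

variable {N M L : ℕ}

def tensorOf {L : ℕ} (A : Fin L → Matrix (Fin 2) (Fin 2) ℂ) : TP L :=
  Matrix.of fun i j => ∏ k, A k (i k) (j k)

lemma tpow_eq_tensorOf (N : ℕ) (U : Matrix (Fin 2) (Fin 2) ℂ) :
    tpow N U = tensorOf (fun _ => U) := rfl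

lemma pauliTensor_eq_tensorOf (m : Fin L → Fin 3) :
    pauliTensor m = tensorOf (fun k => pauli (m k)) := rfl

lemma tensorOf_mul (A B : Fin L → Matrix (Fin 2) (Fin 2) ℂ) :
    tensorOf A * tensorOf B = tensorOf (fun k => A k * B k) := by
  ext i j
  simp only [tensorOf, Matrix.mul_apply, Matrix.of_apply]
  rw [Finset.prod_univ_sum, Fintype.piFinset_univ]
  exact Finset.sum_congr rfl fun x _ => (Finset.prod_mul_distrib).symm

lemma tensorOf_sum (g : Fin L → Fin 3 → Matrix (Fin 2) (Fin 2) ℂ) :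
    tensorOf (fun t => ∑ k : Fin 3, g t k)
      = ∑ f : Fin L → Fin 3, tensorOf (fun t => g t (f t)) := by
  ext i j
  simp only [tensorOf, Matrix.of_apply, Matrix.sum_apply]
  rw [Finset.prod_univ_sum, Fintype.piFinset_univ]

lemma tensorOf_smul (c : Fin L → ℂ) (B : Fin L → Matrix (Fin 2) (Fin 2) ℂ) :
    tensorOf (fun t => c t • B t) = (∏ t, c t) • tensorOf B := by
  ext i j
  simp only [tensorOf, Matrix.of_apply, Matrix.smul_apply, smul_eq_mul]
  rw [Finset.prod_mul_distrib]

end Aux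
section Aux2
open Finset

variable {N M L : ℕ}

def permed (σ : Equiv.Perm (Fin N)) (A : TP N) : TP N :=
  Matrix.of fun i j => A (i ∘ σ) (j ∘ σ)

lemma conj_permed (V W : Matrix (Fin 2) (Fin 2) ℂ) (σ : Equiv.Perm (Fin N)) (A : TP N) :
    tpow N V * permed σ A * tpow N W = permed σ (tpow N V * A * tpow N W) := by
  ext i j
  simp only [Matrix.mul_apply, permed, Matrix.of_apply, tpow, Finset.sum_mul]
  have e : (Fin N → Fin 2) ≃ (Fin N → Fin 2) := Equiv.arrowCongr σ.symm (Equiv.refl (Fin 2))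
  rw [← Equiv.sum_comp (Equiv.arrowCongr σ.symm (Equiv.refl (Fin 2)))
      (fun y => ∑ x, (∏ k, V ((i ∘ ⇑σ) k) (x k)) * A x y * ∏ k, W (y k) ((j ∘ ⇑σ) k))]
  refine Finset.sum_congr rfl fun y _ => ?_
  rw [← Equiv.sum_comp (Equiv.arrowCongr σ.symm (Equiv.refl (Fin 2)))
      (fun x => (∏ k, V ((i ∘ ⇑σ) k) (x k)) * A x (⇑(Equiv.arrowCongr σ.symm (Equiv.refl (Fin 2))) y)
        * ∏ k, W ((⇑(Equiv.arrowCongr σ.symm (Equiv.refl (Fin 2))) y) k) ((j ∘ ⇑σ) k))]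
  refine Finset.sum_congr rfl fun x _ => ?_
  have hx : ⇑(Equiv.arrowCongr σ.symm (Equiv.refl (Fin 2))) x = x ∘ ⇑σ := rfl
  have hy : ⇑(Equiv.arrowCongr σ.symm (Equiv.refl (Fin 2))) y = y ∘ ⇑σ := rfl
  rw [hx, hy]
  congr 1
  · congr 1
    exact (Equiv.prod_comp σ (fun k => V (i k) (x k))).symm
  · exact (Equiv.prod_comp σ (fun k => W (y k) (j k))).symm

end Aux2
section Aux3
open Finset

variable {N M L : ℕ}

lemma symmMat_permed (σ : Equiv.Perm (Fin N)) (A : TP N) :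
    symmMat N (permed σ A) = symmMat N A := by
  unfold symmMat
  congr 1
  exact Fintype.sum_equiv (Equiv.mulRight σ)
    (fun τ => Matrix.of fun i j => A (i ∘ ⇑(τ * σ)) (j ∘ ⇑(τ * σ)))
    (fun τ => Matrix.of fun i j => A (i ∘ ⇑τ) (j ∘ ⇑τ)) (fun τ => rfl) |>.symm ▸ rfl

lemma conj_symmMat (V W : Matrix (Fin 2) (Fin 2) ℂ) (A : TP N) :
    tpow N V * symmMat N A * tpow N W = symmMat N (tpow N V * A * tpow N W) := by
  unfold symmMat
  rw [Matrix.mul_smul, Matrix.smul_mul, Matrix.mul_sum, Matrix.sum_mul]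
  congr 1
  refine Finset.sum_congr rfl fun σ _ => ?_
  exact conj_permed V W σ A

def castEquiv (h : M ≤ N) : Fin M ≃ {k : Fin N // (k : ℕ) < M} where
  toFun t := ⟨Fin.castLE h t, t.isLt⟩
  invFun k := ⟨k.1, k.2⟩
  left_inv t := rfl
  right_inv k := rfl

def extPerm (h : M ≤ N) (τ : Equiv.Perm (Fin M)) : Equiv.Perm (Fin N) :=
  τ.extendDomain (castEquiv h)

lemma extPerm_castLE (h : M ≤ N) (τ : Equiv.Perm (Fin M)) (t : Fin M) :
    extPerm h τ (Fin.castLE h t) = Fin.castLE h (τ t) :=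
  Equiv.Perm.extendDomain_apply_image τ (castEquiv h) t

lemma extPerm_high (h : M ≤ N) (τ : Equiv.Perm (Fin M)) (k : Fin N) (hk : ¬ (k : ℕ) < M) :
    extPerm h τ k = k :=
  Equiv.Perm.extendDomain_apply_not_subtype τ (castEquiv h) hk

lemma embedMat_neg (h : ¬ M ≤ N) (b : TP M) : embedMat M N b = 0 := by
  unfold embedMat; rw [dif_neg h]

lemma embed_permed (h : M ≤ N) (τ : Equiv.Perm (Fin M)) (b : TP M) :
    embedMat M N (permed τ b) = permed (extPerm h τ) (embedMat M N b) := by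
  ext i j
  simp only [embedMat, dif_pos h, permed, Matrix.of_apply]
  congr 1
  · congr 1
    · funext t
      simp only [Function.comp_apply]
      rw [← extPerm_castLE h τ t]
    · funext t
      simp only [Function.comp_apply]
      rw [← extPerm_castLE h τ t]
  · refine Finset.prod_congr rfl fun k hk => ?_
    have hk' : ¬ (k : ℕ) < M := by
      simp only [Finset.mem_filter] at hk; omega
    rw [Function.comp_apply, Function.comp_apply, extPerm_high h τ k hk']

lemma SMN_permed (τ : Equiv.Perm (Fin M)) (b : TP M) :
    SMN M N (permed τ b) = SMN M N b := by
  by_cases h : M ≤ N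
  · unfold SMN
    rw [embed_permed h, symmMat_permed]
  · unfold SMN
    rw [embedMat_neg h, embedMat_neg h]

lemma pauliTensor_comp (f : Fin L → Fin 3) (τ : Equiv.Perm (Fin L)) :
    pauliTensor (f ∘ ⇑τ) = permed τ⁻¹ (pauliTensor f) := by
  ext i j
  simp only [pauliTensor, permed, Matrix.of_apply, Function.comp_apply]
  rw [← Equiv.prod_comp τ (fun k => pauli (f k) (i (τ⁻¹ k)) (j (τ⁻¹ k)))]
  refine Finset.prod_congr rfl fun k _ => ?_
  rw [← Equiv.Perm.mul_apply, inv_mul_cancel, Equiv.Perm.one_apply]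

lemma SMN_pauli_comp (f : Fin M → Fin 3) (τ : Equiv.Perm (Fin M)) :
    SMN M N (pauliTensor (f ∘ ⇑τ)) = SMN M N (pauliTensor f) := by
  rw [pauliTensor_comp, SMN_permed]

end Aux3
section Aux4
open Finset

variable {N M L : ℕ}

lemma exists_perm_of_card_fibers_eq {g f : Fin M → Fin 3}
    (hc : ∀ j, (univ.filter fun t => g t = j).card = (univ.filter fun t => f t = j).card) :
    ∃ τ : Equiv.Perm (Fin M), g = f ∘ ⇑τ := by
  have hcard : ∀ j, Fintype.card {t // g t = j} = Fintype.card {t // f t = j} := by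
    intro j
    rw [Fintype.card_subtype, Fintype.card_subtype, hc j]
  let e : ∀ j : Fin 3, {t // g t = j} ≃ {t // f t = j} :=
    fun j => Fintype.equivOfCardEq (hcard j)
  refine ⟨(Equiv.sigmaFiberEquiv g).symm.trans
    ((Equiv.sigmaCongrRight e).trans (Equiv.sigmaFiberEquiv f)), ?_⟩
  funext t
  exact ((e (g t) ⟨t, rfl⟩).2).symm

lemma SMN_pauli_of_card_fibers_eq {g f : Fin M → Fin 3}
    (hc : ∀ j, (univ.filter fun t => g t = j).card = (univ.filter fun t => f t = j).card) :
    SMN M N (pauliTensor g) = SMN M N (pauliTensor f) := by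
  obtain ⟨τ, hτ⟩ := exists_perm_of_card_fibers_eq hc
  rw [hτ, SMN_pauli_comp]

lemma SMN_pauli_len {L L' : ℕ} (hE : L' = L) (g : Fin L' → Fin 3) (f : Fin L → Fin 3)
    (hc : ∀ j, (univ.filter fun t => g t = j).card = (univ.filter fun t => f t = j).card) :
    SMN L' N (pauliTensor g) = SMN L N (pauliTensor f) := by
  subst hE
  exact SMN_pauli_of_card_fibers_eq hc

lemma card_filter_val (L : ℕ) (Q : ℕ → Prop) [DecidablePred Q] :
    (Finset.univ.filter fun t : Fin L => Q t.1).card = ((Finset.range L).filter Q).card := by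
  rw [← Finset.card_map ⟨Fin.val, Fin.val_injective⟩]
  congr 1
  ext a
  simp only [Finset.mem_map, Finset.mem_filter, Finset.mem_range, Finset.mem_univ, true_and,
    Function.Embedding.coeFn_mk]
  constructor
  · rintro ⟨t, hq, rfl⟩; exact ⟨t.2, hq⟩
  · rintro ⟨ha, hq⟩; exact ⟨⟨a, ha⟩, hq, rfl⟩

lemma monFun_count (d : Fin 3 →₀ ℕ) (j : Fin 3) :
    (Finset.univ.filter fun t : Fin (d 0 + d 1 + d 2) => monFun d t = j).card = d j := by
  fin_cases j
  · show (Finset.univ.filter fun t : Fin (d 0 + d 1 + d 2) => monFun d t = 0).card = d 0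
    have h : ∀ t : Fin (d 0 + d 1 + d 2), monFun d t = 0 ↔ (t : ℕ) < d 0 := by
      intro t; unfold monFun; split_ifs with h1 h2 <;> simp_all
    simp only [h]
    rw [card_filter_val (d 0 + d 1 + d 2) (fun a => a < d 0)]
    have : (Finset.range (d 0 + d 1 + d 2)).filter (fun a => a < d 0) = Finset.range (d 0) := by
      ext a; simp only [Finset.mem_filter, Finset.mem_range]; omega
    rw [this, Finset.card_range]
  · show (Finset.univ.filter fun t : Fin (d 0 + d 1 + d 2) => monFun d t = 1).card = d 1
    have h : ∀ t : Fin (d 0 + d 1 + d 2), monFun d t = 1 ↔ (d 0 ≤ (t : ℕ) ∧ (t : ℕ) < d 0 + d 1) := by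
      intro t; unfold monFun; split_ifs with h1 h2 <;> simp_all <;> omega
    simp only [h]
    rw [card_filter_val (d 0 + d 1 + d 2) (fun a => d 0 ≤ a ∧ a < d 0 + d 1)]
    have : (Finset.range (d 0 + d 1 + d 2)).filter (fun a => d 0 ≤ a ∧ a < d 0 + d 1)
        = Finset.Ico (d 0) (d 0 + d 1) := by
      ext a; simp only [Finset.mem_filter, Finset.mem_range, Finset.mem_Ico]; omega
    rw [this, Nat.card_Ico]
    omega
  · show (Finset.univ.filter fun t : Fin (d 0 + d 1 + d 2) => monFun d t = 2).card = d 2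
    have h : ∀ t : Fin (d 0 + d 1 + d 2), monFun d t = 2 ↔ (d 0 + d 1 ≤ (t : ℕ)) := by
      intro t; unfold monFun; split_ifs with h1 h2 <;> simp_all <;> omega
    simp only [h]
    rw [card_filter_val (d 0 + d 1 + d 2) (fun a => d 0 + d 1 ≤ a)]
    have : (Finset.range (d 0 + d 1 + d 2)).filter (fun a => d 0 + d 1 ≤ a)
        = Finset.Ico (d 0 + d 1) (d 0 + d 1 + d 2) := by
      ext a; simp only [Finset.mem_filter, Finset.mem_range, Finset.mem_Ico]; omega
    rw [this, Nat.card_Ico]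
    omega

def cnt (f : Fin M → Fin 3) : Fin 3 →₀ ℕ := ∑ t, Finsupp.single (f t) 1

lemma cnt_apply (f : Fin M → Fin 3) (j : Fin 3) :
    cnt f j = (univ.filter fun t => f t = j).card := by
  rw [Finset.card_filter]
  unfold cnt
  rw [Finsupp.finset_sum_apply]
  exact Finset.sum_congr rfl fun t _ => by rw [Finsupp.single_apply]

lemma cnt_sum (f : Fin M → Fin 3) : cnt f 0 + cnt f 1 + cnt f 2 = M := by
  simp only [cnt_apply]
  have := Finset.card_eq_sum_card_fiberwise (fun t (_ : t ∈ (univ : Finset (Fin M))) =>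
    Finset.mem_univ (f t))
  rw [Finset.card_univ, Fintype.card_fin] at this
  rw [Fin.sum_univ_three] at this
  exact this.symm

end Aux4
section Aux5
open Finset

variable {N M L : ℕ}

lemma map_castLEEmb (h : M ≤ N) :
    (Finset.univ : Finset (Fin M)).map (Fin.castLEEmb h)
      = Finset.univ.filter (fun k : Fin N => (k : ℕ) < M) := by
  ext k
  simp only [Finset.mem_map, Finset.mem_univ, true_and, Finset.mem_filter, Fin.castLEEmb,
    Function.Embedding.coeFn_mk]
  constructor
  · rintro ⟨t, rfl⟩; exact t.2
  · intro hk; exact ⟨⟨k, hk⟩, rfl⟩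

lemma embed_tensorOf (h : M ≤ N) (A : Fin M → Matrix (Fin 2) (Fin 2) ℂ) :
    embedMat M N (tensorOf A)
      = tensorOf (fun k : Fin N => if hk : (k : ℕ) < M then A ⟨k, hk⟩ else 1) := by
  ext i j
  simp only [embedMat, dif_pos h, tensorOf, Matrix.of_apply]
  rw [← Finset.prod_filter_mul_prod_filter_not Finset.univ (fun k : Fin N => (k : ℕ) < M)]
  congr 1
  · rw [← map_castLEEmb h, Finset.prod_map]
    refine Finset.prod_congr rfl fun t _ => ?_
    simp only [Fin.castLEEmb_apply, Fin.coe_castLE]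
    rw [dif_pos t.isLt]
  · have hfilt : (Finset.univ.filter fun k : Fin N => ¬ (k : ℕ) < M)
        = Finset.univ.filter fun k : Fin N => M ≤ (k : ℕ) := by
      ext k
      simp only [Finset.mem_filter, Finset.mem_univ, true_and, Nat.not_lt]
    rw [hfilt]
    refine Finset.prod_congr rfl fun k hk => ?_
    simp only [Finset.mem_filter, Finset.mem_univ, true_and] at hk
    rw [dif_neg (by omega), Matrix.one_apply]

lemma conj_embed_tensorOf (V W : Matrix (Fin 2) (Fin 2) ℂ) (hVW : V * W = 1)
    (A : Fin M → Matrix (Fin 2) (Fin 2) ℂ) :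
    tpow N V * embedMat M N (tensorOf A) * tpow N W
      = embedMat M N (tensorOf (fun t => V * A t * W)) := by
  by_cases h : M ≤ N
  · rw [embed_tensorOf h, embed_tensorOf h, tpow_eq_tensorOf, tpow_eq_tensorOf,
      tensorOf_mul, tensorOf_mul]
    refine congrArg tensorOf (funext fun k => ?_)
    by_cases hk : (k : ℕ) < M
    · rw [dif_pos hk, dif_pos hk]
    · rw [dif_neg hk, dif_neg hk, mul_one, hVW]
  · rw [embedMat_neg h, embedMat_neg h, Matrix.mul_zero, Matrix.zero_mul]

lemma embedMat_smul (a : ℂ) (b : TP M) :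
    embedMat M N (a • b) = a • embedMat M N b := by
  by_cases h : M ≤ N
  · ext i j
    simp only [embedMat, dif_pos h, Matrix.of_apply, Matrix.smul_apply, smul_eq_mul]
    ring
  · rw [embedMat_neg h, embedMat_neg h, smul_zero]

lemma embedMat_sum {ι : Type*} (s : Finset ι) (F : ι → TP M) :
    embedMat M N (∑ x ∈ s, F x) = ∑ x ∈ s, embedMat M N (F x) := by
  by_cases h : M ≤ N
  · ext i j
    simp only [embedMat, dif_pos h, Matrix.of_apply, Matrix.sum_apply, Finset.sum_mul]
  · simp only [embedMat_neg h, Finset.sum_const, smul_zero]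

lemma symmMat_smul (a : ℂ) (A : TP N) :
    symmMat N (a • A) = a • symmMat N A := by
  ext i j
  simp only [symmMat, Matrix.smul_apply, Matrix.sum_apply, Matrix.of_apply, smul_eq_mul,
    Finset.mul_sum]
  refine Finset.sum_congr rfl fun σ _ => by ring

lemma symmMat_sum {ι : Type*} (s : Finset ι) (F : ι → TP N) :
    symmMat N (∑ x ∈ s, F x) = ∑ x ∈ s, symmMat N (F x) := by
  ext i j
  simp only [symmMat, Matrix.smul_apply, Matrix.sum_apply, Matrix.of_apply, smul_eq_mul,
    Finset.mul_sum]
  rw [Finset.sum_comm]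

lemma prod_comp_count {β : Type*} [CommMonoid β] (m : Fin M → Fin 3) (g : Fin 3 → β) :
    ∏ t, g (m t) = ∏ j : Fin 3, g j ^ (univ.filter fun t => m t = j).card := by
  rw [Finset.prod_comp g m]
  refine Finset.prod_subset (Finset.subset_univ _) fun j _ hj => ?_
  have : (Finset.univ.filter fun t => m t = j) = ∅ := by
    ext t
    simp only [Finset.mem_filter, Finset.mem_univ, true_and, Finset.notMem_empty, iff_false]
    intro ht
    exact hj (Finset.mem_image.mpr ⟨t, Finset.mem_univ t, ht⟩)
  rw [this, Finset.card_empty, pow_zero]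

end Aux5
section Aux6
open Finset MvPolynomial

variable {N M L : ℕ}

lemma Q_eq_sum_subset {p : MvPolynomial (Fin 3) ℂ} {S : Finset (Fin 3 →₀ ℕ)}
    (hS : p.support ⊆ S) : Q N p = ∑ d ∈ S, p.coeff d • Qmon N d :=
  Finset.sum_subset hS fun d _ hd => by
    rw [MvPolynomial.notMem_support_iff.mp hd, zero_smul]

lemma Q_add (p q : MvPolynomial (Fin 3) ℂ) : Q N (p + q) = Q N p + Q N q := by
  rw [Q_eq_sum_subset (S := p.support ∪ q.support)
      (fun d hd => MvPolynomial.support_add hd),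
    Q_eq_sum_subset (S := p.support ∪ q.support) Finset.subset_union_left,
    Q_eq_sum_subset (S := p.support ∪ q.support) Finset.subset_union_right,
    ← Finset.sum_add_distrib]
  refine Finset.sum_congr rfl fun d _ => ?_
  rw [MvPolynomial.coeff_add, add_smul]

lemma Q_smul (a : ℂ) (p : MvPolynomial (Fin 3) ℂ) : Q N (a • p) = a • Q N p := by
  rw [Q_eq_sum_subset (S := p.support) (MvPolynomial.support_smul),
    Q, Finset.smul_sum]
  refine Finset.sum_congr rfl fun d _ => ?_
  rw [MvPolynomial.coeff_smul, smul_smul, smul_eq_mul]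

def QLin (N : ℕ) : MvPolynomial (Fin 3) ℂ →ₗ[ℂ] TP N where
  toFun := Q N
  map_add' := Q_add
  map_smul' := Q_smul

lemma Q_monomial (d : Fin 3 →₀ ℕ) : Q N (MvPolynomial.monomial d 1) = Qmon N d := by
  unfold Q
  rw [MvPolynomial.support_monomial, if_neg one_ne_zero, Finset.sum_singleton,
    MvPolynomial.coeff_monomial, if_pos rfl, one_smul]

lemma prod_X_eq_monomial (f : Fin M → Fin 3) :
    (∏ t, MvPolynomial.X (f t) : MvPolynomial (Fin 3) ℂ)
      = MvPolynomial.monomial (cnt f) 1 := by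
  unfold cnt
  classical
  induction (Finset.univ : Finset (Fin M)) using Finset.induction_on with
  | empty => simp
  | insert _ _ hx ih =>
    rw [Finset.prod_insert hx, Finset.sum_insert hx, ih, MvPolynomial.X,
      MvPolynomial.monomial_mul, one_mul]

lemma Qmon_cnt (f : Fin L → Fin 3) : Qmon N (cnt f) = SMN L N (pauliTensor f) := by
  unfold Qmon
  refine SMN_pauli_len (cnt_sum f) (monFun (cnt f)) f fun j => ?_
  rw [monFun_count, cnt_apply]

end Aux6
section Main
open Finset MvPolynomial

variable {N : ℕ}

lemma conj_Qmon (V W : Matrix (Fin 2) (Fin 2) ℂ) (hVW : V * W = 1)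
    (c : Fin 3 → Fin 3 → ℂ)
    (hP : ∀ j : Fin 3, V * pauli j * W = ∑ k : Fin 3, c j k • pauli k)
    (d : Fin 3 →₀ ℕ) :
    tpow N V * Qmon N d * tpow N W
      = ∑ f : Fin (d 0 + d 1 + d 2) → Fin 3,
          (∏ t, c (monFun d t) (f t)) • Qmon N (cnt f) := by
  rw [show Qmon N d
      = symmMat N (embedMat (d 0 + d 1 + d 2) N (pauliTensor (monFun d))) from rfl]
  rw [conj_symmMat, pauliTensor_eq_tensorOf, conj_embed_tensorOf V W hVW]
  have h2 : (fun t => V * pauli (monFun d t) * W)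
      = fun t => ∑ k : Fin 3, c (monFun d t) k • pauli k := by
    funext t; exact hP (monFun d t)
  have h1 : (tensorOf fun t => V * pauli (monFun d t) * W)
      = ∑ f : Fin (d 0 + d 1 + d 2) → Fin 3,
          (∏ t, c (monFun d t) (f t)) • pauliTensor f := by
    rw [h2, tensorOf_sum]
    refine Finset.sum_congr rfl fun f _ => ?_
    rw [tensorOf_smul, pauliTensor_eq_tensorOf]
  rw [h1, embedMat_sum, symmMat_sum]
  refine Finset.sum_congr rfl fun f _ => ?_
  rw [embedMat_smul, symmMat_smul, Qmon_cnt]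
  rfl

lemma Q_bind_monomial (c : Fin 3 → Fin 3 → ℂ) (d : Fin 3 →₀ ℕ) :
    (MvPolynomial.bind₁
        (fun j : Fin 3 => ∑ k : Fin 3, MvPolynomial.C (c j k) * MvPolynomial.X k))
        (MvPolynomial.monomial d 1)
      = ∑ f : Fin (d 0 + d 1 + d 2) → Fin 3,
          (∏ t, c (monFun d t) (f t)) • MvPolynomial.monomial (cnt f) 1 := by
  rw [MvPolynomial.bind₁_monomial, map_one, one_mul]
  set φ : Fin 3 → MvPolynomial (Fin 3) ℂ := fun j => ∑ k : Fin 3, C (c j k) * X k with hφ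
  have h1 : ∏ i ∈ d.support, φ i ^ d i = ∏ j : Fin 3, φ j ^ d j :=
    Finset.prod_subset (Finset.subset_univ _) fun j _ hj => by
      rw [Finsupp.notMem_support_iff.mp hj, pow_zero]
  have h2 : ∏ j : Fin 3, φ j ^ d j = ∏ t : Fin (d 0 + d 1 + d 2), φ (monFun d t) := by
    rw [prod_comp_count (monFun d) φ]
    refine (Finset.prod_congr rfl fun j _ => ?_).symm
    rw [monFun_count]
  rw [h1, h2, hφ]
  rw [Finset.prod_univ_sum, Fintype.piFinset_univ]
  refine Finset.sum_congr rfl fun f _ => ?_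
  rw [Finset.prod_mul_distrib, prod_X_eq_monomial, ← map_prod, MvPolynomial.C_mul']

lemma Q_conj_monomial (V : Matrix (Fin 2) (Fin 2) ℂ) (hVW : V * star V = 1)
    (c : Fin 3 → Fin 3 → ℂ)
    (hP : ∀ j : Fin 3, V * pauli j * star V = ∑ k : Fin 3, c j k • pauli k)
    (d : Fin 3 →₀ ℕ) :
    tpow N V * Q N (MvPolynomial.monomial d 1) * tpow N (star V)
      = Q N ((MvPolynomial.bind₁
          (fun j : Fin 3 => ∑ k : Fin 3, MvPolynomial.C (c j k) * MvPolynomial.X k))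
          (MvPolynomial.monomial d 1)) := by
  rw [Q_monomial, conj_Qmon V (star V) hVW c hP d, Q_bind_monomial c d]
  rw [show Q N = ⇑(QLin N) from rfl, map_sum]
  refine Finset.sum_congr rfl fun f _ => ?_
  rw [_root_.map_smul]
  rw [show ⇑(QLin N) = Q N from rfl, Q_monomial]

lemma Q_conj (V : Matrix (Fin 2) (Fin 2) ℂ) (hVW : V * star V = 1)
    (c : Fin 3 → Fin 3 → ℂ)
    (hP : ∀ j : Fin 3, V * pauli j * star V = ∑ k : Fin 3, c j k • pauli k)
    (p : MvPolynomial (Fin 3) ℂ) :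
    tpow N V * Q N p * tpow N (star V)
      = Q N ((MvPolynomial.bind₁
          (fun j : Fin 3 => ∑ k : Fin 3, MvPolynomial.C (c j k) * MvPolynomial.X k)) p) := by
  rw [MvPolynomial.as_sum p]
  rw [show Q N = ⇑(QLin N) from rfl, map_sum, map_sum, map_sum, Matrix.mul_sum,
    Matrix.sum_mul]
  refine Finset.sum_congr rfl fun d _ => ?_
  have hmon : (MvPolynomial.monomial d) (MvPolynomial.coeff d p)
      = (MvPolynomial.coeff d p) • MvPolynomial.monomial d 1 := by
    rw [MvPolynomial.smul_monomial, smul_eq_mul, mul_one]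
  rw [hmon, _root_.map_smul, _root_.map_smul, _root_.map_smul, Matrix.mul_smul, Matrix.smul_mul]
  rw [show ⇑(QLin N) = Q N from rfl]
  rw [Q_conj_monomial V hVW c hP d]

end Main

/-- covariance of `Q_{1/N}`, Eq. (2.22) of the paper: if `U ∈ SU(2)`
and `R ∈ SO(3)` satisfy `U σ_j U* = Σ_k (R⁻¹)_{jk} σ_k`, then
`U^{⊗N} Q_{1/N}(p) (U*)^{⊗N} = Q_{1/N}(p ∘ R⁻¹)` for every polynomial `p` and every `N`. -/
theorem Q_covariance (U : Matrix.specialUnitaryGroup (Fin 2) ℂ)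
    (R : Matrix.specialOrthogonalGroup (Fin 3) ℝ)
    (hUR : ∀ j : Fin 3,
      (U : Matrix (Fin 2) (Fin 2) ℂ) * pauli j * star (U : Matrix (Fin 2) (Fin 2) ℂ) =
        ∑ k : Fin 3, ((((R : Matrix (Fin 3) (Fin 3) ℝ)⁻¹) j k : ℝ) : ℂ) • pauli k)
    (p : MvPolynomial (Fin 3) ℂ) (N : ℕ) :
    tpow N (U : Matrix (Fin 2) (Fin 2) ℂ) * Q N p *
        tpow N (star (U : Matrix (Fin 2) (Fin 2) ℂ)) =
      Q N (MvPolynomial.bind₁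
        (fun j : Fin 3 => ∑ k : Fin 3,
          MvPolynomial.C ((((R : Matrix (Fin 3) (Fin 3) ℝ)⁻¹) j k : ℂ)) *
            MvPolynomial.X k) p) := by
  have hU : (U : Matrix (Fin 2) (Fin 2) ℂ) ∈ Matrix.unitaryGroup (Fin 2) ℂ := U.2.1
  have hVW : (U : Matrix (Fin 2) (Fin 2) ℂ) * star (U : Matrix (Fin 2) (Fin 2) ℂ) = 1 :=
    Matrix.mem_unitaryGroup_iff.mp hU
  exact Q_conj _ hVW
    (fun j k => ((((R : Matrix (Fin 3) (Fin 3) ℝ)⁻¹) j k : ℝ) : ℂ)) hUR p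

end
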